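/- Let n ≥ 1, let E be an n-dimensional real inner product space, V = ℝ × E × ℝ, and B the tractor metric on V. For every Υ ∈ E, the change-of-splitting map Φ_Υ : V → V, Φ_Υ(x,Y,z) = (x, Y + x·Υ, z − ⟨Υ,Y⟩ − (1/2)⟨Υ,Υ⟩·x), is a linear map satisfying B(Φ_Υ u, Φ_Υ v) = B(u, v) for all u, v ∈ V. -/

import Mathlib

/-- The change-of-splitting map Φ_Υ is linear and preserves the
tractor metric B. -/
theorem stmt_1 {n : ℕ} (hn : 1 ≤ n)
    (E : Type*) [NormedAddCommGroup E] [InnerProductSpace ℝ E]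
    [FiniteDimensional ℝ E] (hdim : Module.finrank ℝ E = n)
    (B : (ℝ × E × ℝ) → (ℝ × E × ℝ) → ℝ)
    (hB : ∀ u v : ℝ × E × ℝ,
      B u v = u.1 * v.2.2 + v.1 * u.2.2 + (inner ℝ u.2.1 v.2.1 : ℝ)) :
    ∀ Υ : E, ∃ Φ : (ℝ × E × ℝ) →ₗ[ℝ] (ℝ × E × ℝ),
      (∀ (x : ℝ) (Y : E) (z : ℝ),
        Φ (x, Y, z) = (x, Y + x • Υ,
          z - (inner ℝ Υ Y : ℝ) - (1 / 2) * (inner ℝ Υ Υ : ℝ) * x)) ∧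
      ∀ u v : ℝ × E × ℝ, B (Φ u) (Φ v) = B u v := by
  intro Υ
  refine ⟨{
    toFun := fun p => (p.1, p.2.1 + p.1 • Υ,
      p.2.2 - (inner ℝ Υ p.2.1 : ℝ) - (1 / 2) * (inner ℝ Υ Υ : ℝ) * p.1)
    map_add' := by
      intro p q
      simp only [Prod.fst_add, Prod.snd_add, Prod.mk_add_mk, inner_add_right]
      refine Prod.ext rfl (Prod.ext ?_ ?_) <;> [module; ring]
    map_smul' := by
      intro c p
      simp only [Prod.smul_fst, Prod.smul_snd, Prod.smul_mk, inner_smul_right,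
        RingHom.id_apply, smul_eq_mul]
      refine Prod.ext rfl (Prod.ext ?_ ?_) <;> [module; ring] }, fun x Y z => rfl, ?_⟩
  intro u v
  simp only [hB, LinearMap.coe_mk, AddHom.coe_mk, inner_add_left, inner_add_right,
    real_inner_smul_left, real_inner_smul_right, real_inner_comm Υ]
  ring
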